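/- Let G be a tournament in which every 3-cycle of the underlying complete graph is transitively oriented (i.e., G is a transitive-triangle tournament containing no directed 3-cycle). Then G contains no diasteroidal triple, and consequently G is an interval catch digraph (hence also a circular-arc catch digraph). -/

import Mathlib

/-- Membership in the closed clockwise circular arc starting at `a` of length `ℓ`
on a circle of circumference 1 (points are reals modulo 1). -/
def arcMem (a ℓ x : ℝ) : Prop := Int.fract (x - a) ≤ ℓ

/-- The set of points of the circle (reals, modulo 1) lying on the arc. -/
def arcSet (a ℓ : ℝ) : Set ℝ := {x | arcMem a ℓ x}

/-- `E` is a circular-arc catch digraph: each vertex `v` carries a circular arc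
(start `a v`, length `ℓ v`) and a point `p v` inside its own arc, and
`E u v` iff `u ≠ v` and the point of `v` lies in the arc of `u`. -/
def IsCACatchDigraph {V : Type*} (E : V → V → Prop) : Prop :=
  ∃ a ℓ p : V → ℝ, (∀ v, arcMem (a v) (ℓ v) (p v)) ∧
    ∀ u v, E u v ↔ u ≠ v ∧ arcMem (a u) (ℓ u) (p v)

/-- Proper circular-arc catch digraph: as above, with no arc properly contained
in another. -/
def IsProperCACatchDigraph {V : Type*} (E : V → V → Prop) : Prop :=
  ∃ a ℓ p : V → ℝ, (∀ v, arcMem (a v) (ℓ v) (p v)) ∧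
    (∀ u v : V, ¬ arcSet (a u) (ℓ u) ⊂ arcSet (a v) (ℓ v)) ∧
    ∀ u v, E u v ↔ u ≠ v ∧ arcMem (a u) (ℓ u) (p v)

/-- A digraph is oriented: no pair of vertices has edges in both directions. -/
def Oriented {V : Type*} (E : V → V → Prop) : Prop := ∀ u v, E u v → ¬ E v u

/-- A subset of `Fin n` is a circular (cyclically consecutive) block. -/
def CircBlock {n : ℕ} (S : Set (Fin n)) : Prop :=
  S = ∅ ∨ ∃ a b : Fin n, S = {i | i - a ≤ b - a}


/-- A chain: consecutive vertices are joined by an edge in some direction. -/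
def ChainList {V : Type*} (E : V → V → Prop) (l : List V) : Prop :=
  l.Chain' (fun x y => E x y ∨ E y x)

/-- The chain is avoided by a vertex: no initial endpoint of an arc of the
chain is an inneighbour of that vertex. -/
def AvoidsChain {V : Type*} (E : V → V → Prop) (z : V) (l : List V) : Prop :=
  ∀ (i : ℕ) (x y : V), l[i]? = some x → l[i+1]? = some y →
    (E x y → ¬ E x z) ∧ (E y x → ¬ E y z)

/-- Diasteroidal triple: for each of the three vertices there is a chain
between the other two which it avoids. -/
def DTriple {V : Type*} (E : V → V → Prop) (x y z : V) : Prop :=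
  x ≠ y ∧ y ≠ z ∧ x ≠ z ∧
  (∃ l : List V, l.head? = some y ∧ l.getLast? = some z ∧
      ChainList E l ∧ AvoidsChain E x l) ∧
  (∃ l : List V, l.head? = some x ∧ l.getLast? = some z ∧
      ChainList E l ∧ AvoidsChain E y l) ∧
  (∃ l : List V, l.head? = some x ∧ l.getLast? = some y ∧
      ChainList E l ∧ AvoidsChain E z l)

/-- Interval catch digraph: intervals on the real line with a marked point. -/
def IsIntervalCatchDigraph {V : Type*} (E : V → V → Prop) : Prop :=
  ∃ a b p : V → ℝ, (∀ v, a v ≤ p v ∧ p v ≤ b v) ∧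
    ∀ u v, E u v ↔ u ≠ v ∧ a u ≤ p v ∧ p v ≤ b u

/-- a tournament with no directed 3-cycle has no diasteroidal
triple, hence is an interval catch digraph (and a circular-arc catch
digraph). -/
theorem stmt_11 {V : Type*} [Fintype V] (E : V → V → Prop)
    (hirr : ∀ v, ¬ E v v)
    (htour : ∀ u v : V, u ≠ v → (E u v ↔ ¬ E v u))
    (hno3 : ¬ ∃ a b c : V, E a b ∧ E b c ∧ E c a) :
    (¬ ∃ x y z : V, DTriple E x y z) ∧
    IsIntervalCatchDigraph E ∧ IsCACatchDigraph E := by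
  classical
  have hne : ∀ {u v : V}, E u v → u ≠ v := by
    rintro u v h rfl; exact hirr u h
  have htrans : ∀ {a b c : V}, E a b → E b c → E a c := by
    intro a b c hab hbc
    by_contra hac
    have hac' : a ≠ c := by
      rintro rfl; exact ((htour a b (hne hab)).mp hab) hbc
    exact hno3 ⟨a, b, c, hab, hbc, (htour c a hac'.symm).mpr hac⟩
  -- head of an avoided chain does not beat the avoider
  have hhead : ∀ (x y z : V) (l : List V), l.head? = some y → l.getLast? = some z →
      y ≠ z → ChainList E l → AvoidsChain E x l → ¬ E y x := by
    intro x y z l hh hl hyz hc ha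
    cases l with
    | nil => simp at hh
    | cons y' t =>
      have hy' : y' = y := by simpa using hh
      rw [← hy']
      cases t with
      | nil => exact absurd (hy' ▸ (by simpa using hl : y' = z)) hyz
      | cons w t' =>
        have hrel : E y' w ∨ E w y' := (List.isChain_cons_cons.mp hc).1
        have havoid := ha 0 y' w (by simp) (by simp)
        rcases hrel with h1 | h1
        · exact havoid.1 h1
        · intro hyx
          have hwx : ¬ E w x := havoid.2 h1
          have hxw : x ≠ w := by
            rintro rfl
            exact ((htour y' x (hne hyx)).mp hyx) h1
          have : E x w := (htour x w hxw).mpr hwx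
          exact hno3 ⟨w, y', x, h1, hyx, this⟩
  -- the rank function
  set N : V → ℕ := fun v => (Finset.univ.filter fun u => E v u).card with hNdef
  have hlt : ∀ u v, E u v → N v < N u := by
    intro u v huv
    apply Finset.card_lt_card
    rw [Finset.ssubset_iff_of_subset]
    · exact ⟨v, by simp [huv], by simp [hirr v]⟩
    · intro w hw
      simp only [Finset.mem_filter, Finset.mem_univ, true_and] at hw ⊢
      exact htrans huv hw
  have hEiff : ∀ u v, E u v ↔ u ≠ v ∧ N v ≤ N u := by
    intro u v
    constructor
    · intro h; exact ⟨hne h, (hlt u v h).le⟩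
    · rintro ⟨huv, hle⟩
      by_contra h
      have hvu : E v u := (htour v u huv.symm).mpr h
      exact absurd hle (not_le.mpr (hlt v u hvu))
  have hNlt : ∀ v : V, N v < Fintype.card V := by
    intro v
    apply Finset.card_lt_card
    rw [Finset.ssubset_iff_of_subset (Finset.subset_univ _)]
    exact ⟨v, Finset.mem_univ v, by simp [hirr v]⟩
  refine ⟨?_, ?_, ?_⟩
  · rintro ⟨x, y, z, hxy, hyz, hxz, ⟨l1, h1h, h1l, h1c, h1a⟩, ⟨l2, h2h, h2l, h2c, h2a⟩, -⟩
    have h1 := hhead x y z l1 h1h h1l hyz h1c h1a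
    have h2 := hhead y x z l2 h2h h2l hxz h2c h2a
    exact h2 ((htour x y hxy).mpr h1)
  · refine ⟨fun _ => 0, fun v => (N v : ℝ), fun v => (N v : ℝ), fun v => ⟨Nat.cast_nonneg _, le_refl _⟩, ?_⟩
    intro u v
    rw [hEiff u v]
    constructor
    · rintro ⟨huv, hle⟩
      exact ⟨huv, Nat.cast_nonneg _, Nat.cast_le.mpr hle⟩
    · rintro ⟨huv, -, hle⟩
      exact ⟨huv, Nat.cast_le.mp hle⟩
  · set n : ℝ := (Fintype.card V : ℝ) with hn
    set q : V → ℝ := fun v => (N v : ℝ) / n with hq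
    have hqmem : ∀ v : V, 0 ≤ q v ∧ q v < 1 := by
      intro v
      have hnpos : (0:ℝ) < n := by
        rw [hn]; exact_mod_cast Fintype.card_pos_iff.mpr ⟨v⟩
      constructor
      · exact div_nonneg (Nat.cast_nonneg _) hnpos.le
      · rw [hq, div_lt_one hnpos, hn]
        exact_mod_cast hNlt v
    have hfract : ∀ v : V, Int.fract (q v) = q v := fun v =>
      Int.fract_eq_self.mpr ⟨(hqmem v).1, (hqmem v).2⟩
    refine ⟨fun _ => 0, q, q, fun v => ?_, ?_⟩
    · show Int.fract (q v - 0) ≤ q v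
      rw [sub_zero, hfract v]
    · intro u v
      rw [hEiff u v]
      have hnpos : ∀ w : V, (0:ℝ) < n := by
        intro w; rw [hn]; exact_mod_cast Fintype.card_pos_iff.mpr ⟨w⟩
      have harc : arcMem 0 (q u) (q v) ↔ N v ≤ N u := by
        unfold arcMem
        rw [sub_zero, hfract v, hq]
        rw [div_le_div_iff_of_pos_right (hnpos v)]
        exact Nat.cast_le
      rw [harc]
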